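/- arXiv:2108.05254 — 5 statements merged into one kernel-verified Lean document; each statement's English description precedes it below -/
import Mathlib

section
/- Let m : [0, s̄] → [0, ∞) be a non-increasing bounded function, and for κ > 0 let J_κ = {s₀ ∈ [0, s̄] : |m(s) − m(s₀)| ≤ κ·|s − s₀| for all s ∈ [0, s̄]}. Then the Lebesgue measure of J_κ satisfies meas(J_κ) ≥ s̄ − 2·m(0)/κ; in particular meas(J_κ) → s̄ as κ → +∞. -/
open MeasureTheory Filter Set
open scoped ENNReal Topology

/-! Rising sun. For an antitone `f` bounded above and `κ > 0`, the running maximum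
`h x = sup_{s ≤ x} (f s + κ s)` is monotone and `κ`-Lipschitz, and it is constant just to the
right of every point of the shadow `{x | f x + κ x < h x}`, so it maps the shadow onto a
countable set. Hence on `[a, b]` the whole rise `h b - h a ≥ κ (b - a) - (sup f - f b)` happens
off the shadow, so the complement of the shadow has measure at least
`b - a - (sup f - f b) / κ`. A point off the shadow sees `f` drop by at most `κ |y - x|` from
the left; reflecting `y ↦ -f (-y)` handles the right, so the points of `[0, s̄]` at which `m`
fails to be `κ`-Lipschitz have measure at most `2 (m 0 - m s̄) / κ ≤ 2 m 0 / κ`. -/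

theorem LipschitzWith.volume_image_le {K : NNReal} {f : ℝ → ℝ} (hf : LipschitzWith K f)
    (s : Set ℝ) : volume (f '' s) ≤ K * volume s := by
  simpa [hausdorffMeasure_real, ENNReal.rpow_one] using hf.hausdorffMeasure_image_le zero_le_one s

noncomputable def risingSun (f : ℝ → ℝ) (κ x : ℝ) : ℝ := sSup ((fun s ↦ f s + κ * s) '' Iic x)

def sunShadow (f : ℝ → ℝ) (κ : ℝ) : Set ℝ := {x | ∃ s < x, f x + κ * x < f s + κ * s}

def lipschitzPoints (f : ℝ → ℝ) (κ : ℝ) (s : Set ℝ) : Set ℝ :=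
  {x ∈ s | ∀ y ∈ s, |f y - f x| ≤ κ * |y - x|}

section RisingSun

variable {f : ℝ → ℝ} {κ M a b x y : ℝ}

theorem bddAbove_image_Iic_add_mul (hM : ∀ x, f x ≤ M) (hκ : 0 ≤ κ) (x : ℝ) :
    BddAbove ((fun s ↦ f s + κ * s) '' Iic x) := by
  refine ⟨M + κ * x, ?_⟩
  rintro _ ⟨s, hs, rfl⟩
  exact add_le_add (hM s) (mul_le_mul_of_nonneg_left hs hκ)

theorem le_risingSun (hM : ∀ x, f x ≤ M) (hκ : 0 ≤ κ) (hyx : y ≤ x) :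
    f y + κ * y ≤ risingSun f κ x :=
  le_csSup (bddAbove_image_Iic_add_mul hM hκ x) ⟨y, hyx, rfl⟩

theorem risingSun_le (hM : ∀ x, f x ≤ M) (hκ : 0 ≤ κ) : risingSun f κ x ≤ M + κ * x :=
  csSup_le (nonempty_Iic.image _) fun _ ⟨s, hs, hs'⟩ ↦
    hs' ▸ add_le_add (hM s) (mul_le_mul_of_nonneg_left hs hκ)

theorem monotone_risingSun (hM : ∀ x, f x ≤ M) (hκ : 0 ≤ κ) : Monotone (risingSun f κ) :=
  fun _ y hxy ↦ csSup_le_csSup (bddAbove_image_Iic_add_mul hM hκ y) (nonempty_Iic.image _)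
    (image_mono (Iic_subset_Iic.2 hxy))

theorem risingSun_le_max (hf : Antitone f) (hM : ∀ x, f x ≤ M) (hκ : 0 ≤ κ) :
    risingSun f κ y ≤ max (risingSun f κ x) (f x + κ * y) := by
  refine csSup_le (nonempty_Iic.image _) ?_
  rintro _ ⟨s, hs, rfl⟩
  rcases le_total s x with hsx | hxs
  · exact le_max_of_le_left (le_risingSun hM hκ hsx)
  · exact le_max_of_le_right (add_le_add (hf hxs) (mul_le_mul_of_nonneg_left hs hκ))

theorem lipschitzWith_risingSun (hf : Antitone f) (hM : ∀ x, f x ≤ M) (hκ : 0 ≤ κ) :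
    LipschitzWith κ.toNNReal (risingSun f κ) := by
  refine LipschitzWith.of_le_add_mul' κ fun x y ↦ ?_
  rcases le_total x y with hxy | hyx
  · have := monotone_risingSun hM hκ hxy
    nlinarith [dist_nonneg (x := x) (y := y)]
  · have hmax := risingSun_le_max hf hM hκ (x := y) (y := x)
    have hy := le_risingSun hM hκ (le_refl y)
    rw [Real.dist_eq, abs_of_nonneg (sub_nonneg.2 hyx)]
    rcases max_cases (risingSun f κ y) (f y + κ * x) with ⟨h, -⟩ | ⟨h, -⟩ <;> nlinarith

theorem sunShadow_eq_setOf_lt_risingSun (hM : ∀ x, f x ≤ M) (hκ : 0 ≤ κ) :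
    sunShadow f κ = {x | f x + κ * x < risingSun f κ x} := by
  ext x
  rw [mem_ofPred, risingSun,
    lt_csSup_iff (bddAbove_image_Iic_add_mul hM hκ x) (nonempty_Iic.image _)]
  constructor
  · rintro ⟨s, hsx, hlt⟩
    exact ⟨_, ⟨s, hsx.le, rfl⟩, hlt⟩
  · rintro ⟨_, ⟨s, hsx, rfl⟩, hlt⟩
    exact ⟨s, hsx.lt_of_ne (by rintro rfl; exact hlt.false), hlt⟩

theorem risingSun_eq_of_mul_sub_le (hf : Antitone f) (hM : ∀ x, f x ≤ M) (hκ : 0 ≤ κ)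
    (hxy : x ≤ y) (hgap : κ * (y - x) ≤ risingSun f κ x - (f x + κ * x)) :
    risingSun f κ y = risingSun f κ x :=
  le_antisymm ((risingSun_le_max hf hM hκ).trans (max_le le_rfl (by linarith)))
    (monotone_risingSun hM hκ hxy)

theorem countable_risingSun_image_sunShadow (hf : Antitone f) (hM : ∀ x, f x ≤ M)
    (hκ : 0 < κ) : (risingSun f κ '' sunShadow f κ).Countable := by
  have hdisj : (risingSun f κ '' sunShadow f κ).PairwiseDisjoint (risingSun f κ ⁻¹' {·}) :=
    fun _ _ _ _ hvw ↦ disjoint_left.2 fun _ hv hw ↦ hvw (hv.symm.trans hw)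
  refine hdisj.countable_of_nonempty_interior ?_
  rintro _ ⟨x, hx, rfl⟩
  rw [sunShadow_eq_setOf_lt_risingSun hM hκ.le] at hx
  set δ := (risingSun f κ x - (f x + κ * x)) / κ
  have hδ : 0 < δ := div_pos (sub_pos.2 hx) hκ
  have hconst : Ioo x (x + δ) ⊆ risingSun f κ ⁻¹' {risingSun f κ x} := fun y hy ↦
    risingSun_eq_of_mul_sub_le hf hM hκ.le hy.1.le <| by
      have := mul_le_mul_of_nonneg_left (show y - x ≤ δ by linarith [hy.2]) hκ.le
      rwa [mul_div_cancel₀ _ hκ.ne'] at this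
  exact ⟨x + δ / 2, interior_maximal hconst isOpen_Ioo ⟨by linarith, by linarith⟩⟩

theorem ofReal_risingSun_sub_le_mul_volume (hf : Antitone f) (hM : ∀ x, f x ≤ M) (hκ : 0 < κ)
    (hab : a ≤ b) :
    ENNReal.ofReal (risingSun f κ b - risingSun f κ a) ≤
      ENNReal.ofReal κ * volume (Icc a b \ sunShadow f κ) := by
  set h := risingSun f κ
  have hLip := lipschitzWith_risingSun hf hM hκ.le
  calc ENNReal.ofReal (h b - h a) = volume (Icc (h a) (h b)) := Real.volume_Icc.symm
    _ ≤ volume (h '' Icc a b) :=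
      measure_mono (intermediate_value_Icc hab hLip.continuous.continuousOn)
    _ ≤ volume (h '' (Icc a b \ sunShadow f κ) ∪ h '' sunShadow f κ) := by
      rw [← image_union]
      exact measure_mono (image_mono (subset_sdiff_union _ _))
    _ ≤ volume (h '' (Icc a b \ sunShadow f κ)) + volume (h '' sunShadow f κ) :=
      measure_union_le _ _
    _ = volume (h '' (Icc a b \ sunShadow f κ)) := by
      rw [(countable_risingSun_image_sunShadow hf hM hκ).measure_zero, add_zero]
    _ ≤ ENNReal.ofReal κ * volume (Icc a b \ sunShadow f κ) := hLip.volume_image_le _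

theorem volume_sunShadow_inter_Icc_le (hf : Antitone f) (hM : ∀ x, f x ≤ M) (hκ : 0 < κ)
    (hab : a ≤ b) : volume (sunShadow f κ ∩ Icc a b) ≤ ENNReal.ofReal ((M - f b) / κ) := by
  set d := (M - f b) / κ
  have hS : MeasurableSet (sunShadow f κ) := sunShadow_eq_setOf_lt_risingSun hM hκ.le ▸
    measurableSet_lt (hf.measurable.add (measurable_id.const_mul κ))
      (lipschitzWith_risingSun hf hM hκ.le).continuous.measurable
  have hrest : ENNReal.ofReal (b - a - d) ≤ volume (Icc a b \ sunShadow f κ) := by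
    have hrise : κ * (b - a - d) ≤ risingSun f κ b - risingSun f κ a := by
      have := le_risingSun hM hκ.le (le_refl b)
      have := risingSun_le hM hκ.le (x := a)
      rw [mul_sub, mul_div_cancel₀ _ hκ.ne']
      linarith
    refine (ENNReal.mul_le_mul_iff_right (ENNReal.ofReal_pos.2 hκ).ne' ENNReal.ofReal_ne_top).1 ?_
    rw [← ENNReal.ofReal_mul hκ.le]
    exact (ENNReal.ofReal_le_ofReal hrise).trans (ofReal_risingSun_sub_le_mul_volume hf hM hκ hab)
  calc volume (sunShadow f κ ∩ Icc a b)
      = volume (Icc a b) - volume (Icc a b \ sunShadow f κ) := by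
        rw [inter_comm]
        exact ENNReal.eq_sub_of_add_eq
          (measure_ne_top_of_subset sdiff_subset measure_Icc_lt_top.ne)
          (measure_inter_add_sdiff _ hS)
    _ ≤ ENNReal.ofReal (b - a) - ENNReal.ofReal (b - a - d) := by
        rw [Real.volume_Icc]
        exact tsub_le_tsub_left hrest _
    _ ≤ ENNReal.ofReal d := by
        rw [tsub_le_iff_left]
        simpa using ENNReal.ofReal_add_le (p := b - a - d) (q := d)

theorem volume_lipschitzPoints_Icc_ge (hab : a ≤ b) (hf : AntitoneOn f (Icc a b))
    (hκ : 0 < κ) :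
    ENNReal.ofReal (b - a - 2 * (f a - f b) / κ) ≤ volume (lipschitzPoints f κ (Icc a b)) := by
  -- `F` extends `f` by constants; `G` turns the right-hand drops of `F` into left-hand ones.
  set F : ℝ → ℝ := fun x ↦ f (projIcc a b hab x)
  set G : ℝ → ℝ := fun y ↦ -F (-y)
  have hF_eq : ∀ x ∈ Icc a b, F x = f x := fun x hx ↦ by simp [F, projIcc_of_mem hab hx]
  have hF : Antitone F := fun x y hxy ↦
    hf (projIcc a b hab x).2 (projIcc a b hab y).2 (monotone_projIcc hab hxy)
  have hG : Antitone G := fun x y hxy ↦ neg_le_neg (hF (neg_le_neg hxy))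
  have hFa : ∀ x, F x ≤ f a := fun x ↦
    hf (left_mem_Icc.2 hab) (projIcc a b hab x).2 (projIcc a b hab x).2.1
  have hGb : ∀ y, G y ≤ -f b := fun y ↦ neg_le_neg <|
    hf (projIcc a b hab (-y)).2 (right_mem_Icc.2 hab) (projIcc a b hab (-y)).2.2
  have hL := volume_sunShadow_inter_Icc_le hF hFa hκ hab
  have hR := volume_sunShadow_inter_Icc_le hG hGb hκ (neg_le_neg hab)
  rw [hF_eq b (right_mem_Icc.2 hab)] at hL
  simp only [G, neg_neg, hF_eq a (left_mem_Icc.2 hab), sub_neg_eq_add, neg_add_eq_sub] at hR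
  have hcover : Icc a b ⊆ lipschitzPoints f κ (Icc a b) ∪
      (sunShadow F κ ∩ Icc a b ∪ -(sunShadow G κ ∩ Icc (-b) (-a))) := by
    rintro x hx
    by_cases hxL : x ∈ sunShadow F κ
    · exact Or.inr (Or.inl ⟨hxL, hx⟩)
    by_cases hxR : -x ∈ sunShadow G κ
    · exact Or.inr (Or.inr ⟨hxR, neg_le_neg hx.2, neg_le_neg hx.1⟩)
    refine Or.inl ⟨hx, fun y hy ↦ ?_⟩
    simp only [sunShadow, mem_ofPred, not_exists, not_and, not_lt] at hxL hxR
    rcases lt_trichotomy y x with hyx | rfl | hxy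
    · have hdrop := hxL y hyx
      have hmono := hf hy hx hyx.le
      rw [hF_eq x hx, hF_eq y hy] at hdrop
      rw [abs_of_nonneg (sub_nonneg.2 hmono), abs_of_neg (sub_neg.2 hyx)]
      linarith
    · simp
    · have hdrop := hxR (-y) (neg_lt_neg hxy)
      have hmono := hf hx hy hxy.le
      simp only [G, neg_neg, hF_eq x hx, hF_eq y hy] at hdrop
      rw [abs_of_nonpos (sub_nonpos.2 hmono), abs_of_pos (sub_pos.2 hxy)]
      linarith
  set d := (f a - f b) / κ
  have hd : 0 ≤ d :=
    div_nonneg (sub_nonneg.2 (hf (left_mem_Icc.2 hab) (right_mem_Icc.2 hab) hab)) hκ.le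
  have hIcc : volume (Icc a b) ≤
      volume (lipschitzPoints f κ (Icc a b)) + (ENNReal.ofReal d + ENNReal.ofReal d) := by
    refine (measure_mono hcover).trans <| (measure_union_le _ _).trans <|
      add_le_add_right ((measure_union_le _ _).trans ?_) _
    rw [Measure.measure_neg]
    exact add_le_add hL hR
  rw [show b - a - 2 * (f a - f b) / κ = b - a - (d + d) by ring,
    ENNReal.ofReal_sub _ (add_nonneg hd hd), ENNReal.ofReal_add hd hd, ← Real.volume_Icc]
  exact tsub_le_iff_right.2 hIcc

end RisingSun

/-- Riesz sunrise estimate for monotone functions.  Let `m : [0, sbar] → [0, ∞)` be a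
non-increasing bounded function and, for `κ > 0`, let
`J_κ = {s₀ ∈ [0, sbar] : |m(s) − m(s₀)| ≤ κ|s − s₀| for all s ∈ [0, sbar]}`.
Then `meas(J_κ) ≥ sbar − 2·m(0)/κ`; in particular `meas(J_κ) → sbar` as `κ → ∞`. -/
theorem sunrise_lipschitz_points (sbar : ℝ) (hsbar : 0 ≤ sbar) (m : ℝ → ℝ)
    (hm_nonneg : ∀ s ∈ Icc (0 : ℝ) sbar, 0 ≤ m s)
    (hm_mono : ∀ s ∈ Icc (0 : ℝ) sbar, ∀ t ∈ Icc (0 : ℝ) sbar, s ≤ t → m t ≤ m s) :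
    (∀ κ : ℝ, 0 < κ →
      ENNReal.ofReal (sbar - 2 * m 0 / κ) ≤
        volume {s₀ ∈ Icc (0 : ℝ) sbar | ∀ s ∈ Icc (0 : ℝ) sbar, |m s - m s₀| ≤ κ * |s - s₀|}) ∧
    Tendsto
      (fun κ : ℝ =>
        volume {s₀ ∈ Icc (0 : ℝ) sbar | ∀ s ∈ Icc (0 : ℝ) sbar, |m s - m s₀| ≤ κ * |s - s₀|})
      atTop (𝓝 (ENNReal.ofReal sbar)) := by
  have hbound : ∀ κ : ℝ, 0 < κ →
      ENNReal.ofReal (sbar - 2 * m 0 / κ) ≤ volume (lipschitzPoints m κ (Icc 0 sbar)) := by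
    intro κ hκ
    refine (ENNReal.ofReal_le_ofReal ?_).trans (volume_lipschitzPoints_Icc_ge hsbar hm_mono hκ)
    have := hm_nonneg sbar (right_mem_Icc.2 hsbar)
    rw [sub_zero]
    gcongr
    linarith
  have hlower : Tendsto (fun κ : ℝ ↦ ENNReal.ofReal (sbar - 2 * m 0 / κ)) atTop
      (𝓝 (ENNReal.ofReal sbar)) := by
    refine (ENNReal.continuous_ofReal.tendsto _).comp ?_
    simpa using tendsto_const_nhds.sub ((tendsto_const_nhds (x := 2 * m 0)).div_atTop tendsto_id)
  refine ⟨hbound, tendsto_of_tendsto_of_tendsto_of_le_of_le' hlower tendsto_const_nhds ?_ ?_⟩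
  · filter_upwards [eventually_gt_atTop 0] with κ hκ using hbound κ hκ
  · filter_upwards with κ
    exact (measure_mono (sep_subset _ _)).trans_eq (by rw [Real.volume_Icc, sub_zero])
end

section
/- Let γ : [0, s̄] → ℝ² be a 1-Lipschitz curve for which there exists a constant C > 0 with |t − s| ≤ C·|γ(t) − γ(s)| for all s, t ∈ [0, s̄], and let φ ∈ L¹(ℝ²). Then for almost every s₀ ∈ [0, s̄] one has limsup_{r → 0+} (1/r)·∫_{B(γ(s₀), r)} |φ(x)| dx < +∞. -/
/-!
Push Lebesgue measure on `[0, s̄]` forward along `γ` to a finite measure `μ` on the plane.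
The co-Lipschitz bound `|t − s| ≤ C‖γ t − γ s‖` gives `μ(B̄(γ s₀, r)) ≤ 2Cr`, so
`r⁻¹ ∫_{B(γ s₀, r)} |φ| ≤ 2C · ν(B̄(γ s₀, r)) / μ(B̄(γ s₀, r))` with `ν = |φ| dx`.
By the Besicovitch differentiation theorem the right-hand ratio converges, `μ`-a.e., to the
finite density `dν/dμ`; pulling back along `γ` gives the claim for a.e. `s₀`.
-/

open MeasureTheory Filter Metric Set
open scoped ENNReal Topology

noncomputable section

/-- Points of the plane `ℝ²`, with the Euclidean norm. -/
abbrev Euc2 : Type := EuclideanSpace ℝ (Fin 2)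

theorem ae_limsup_measure_closedBall_div_lt_top {α : Type*} [MetricSpace α] [MeasurableSpace α]
    [BorelSpace α] [SecondCountableTopology α] [HasBesicovitchCovering α] (ν μ : Measure α)
    [IsLocallyFiniteMeasure μ] [IsLocallyFiniteMeasure ν] :
    ∀ᵐ x ∂μ, limsup (fun r => ν (closedBall x r) / μ (closedBall x r)) (𝓝[>] 0) < ∞ := by
  filter_upwards [Besicovitch.ae_tendsto_rnDeriv ν μ, Measure.rnDeriv_lt_top ν μ]
    with x hx hx_lt_top
  rwa [hx.limsup_eq]

theorem map_restrict_volume_closedBall_le {E : Type*} [PseudoMetricSpace E] [MeasurableSpace E]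
    [OpensMeasurableSpace E] {S : Set ℝ} (hS : MeasurableSet S) {γ : ℝ → E}
    (hγ : AEMeasurable γ (volume.restrict S)) {C : ℝ} (hC : 0 ≤ C)
    (hγ_dist : ∀ s ∈ S, ∀ t ∈ S, dist t s ≤ C * dist (γ t) (γ s)) {s₀ : ℝ} (hs₀ : s₀ ∈ S)
    (r : ℝ) :
    (volume.restrict S).map γ (closedBall (γ s₀) r) ≤ ENNReal.ofReal (2 * C * r) := by
  have hsub : γ ⁻¹' closedBall (γ s₀) r ∩ S ⊆ closedBall s₀ (C * r) := fun s ⟨hs_ball, hs⟩ =>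
    (hγ_dist s₀ hs₀ s hs).trans (mul_le_mul_of_nonneg_left hs_ball hC)
  rw [Measure.map_apply_of_aemeasurable hγ measurableSet_closedBall,
    Measure.restrict_apply' hS, mul_assoc, ← Real.volume_closedBall]
  exact measure_mono hsub

theorem ENNReal.inv_ofReal_mul_le_mul_div {a m : ℝ≥0∞} {K r : ℝ} (hK : 0 < K)
    (hm : m ≤ ENNReal.ofReal (K * r)) :
    (ENNReal.ofReal r)⁻¹ * a ≤ ENNReal.ofReal K * (a / m) := by
  have hinv : (ENNReal.ofReal r)⁻¹ = ENNReal.ofReal K * (ENNReal.ofReal (K * r))⁻¹ := by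
    rw [ENNReal.ofReal_mul hK.le, ENNReal.mul_inv (Or.inr ENNReal.ofReal_ne_top)
      (Or.inl ENNReal.ofReal_ne_top), ← mul_assoc, ENNReal.mul_inv_cancel
      (ENNReal.ofReal_pos.2 hK).ne' ENNReal.ofReal_ne_top, one_mul]
  rw [hinv, div_eq_mul_inv, mul_comm a, ← mul_assoc]
  gcongr

theorem limsup_inv_mul_measure_ball_lt_top {α : Type*} [PseudoMetricSpace α]
    [MeasurableSpace α] {ν μ : Measure α} {x : α} {K : ℝ} (hK : 0 < K)
    (hμ : ∀ r, μ (closedBall x r) ≤ ENNReal.ofReal (K * r))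
    (hνμ : limsup (fun r => ν (closedBall x r) / μ (closedBall x r)) (𝓝[>] 0) < ∞) :
    limsup (fun r => (ENNReal.ofReal r)⁻¹ * ν (ball x r)) (𝓝[>] 0) < ∞ := by
  have hbound : ∀ᶠ r in 𝓝[>] (0 : ℝ), (ENNReal.ofReal r)⁻¹ * ν (ball x r) ≤
      ENNReal.ofReal K * (ν (closedBall x r) / μ (closedBall x r)) :=
    Eventually.of_forall fun r => calc
      (ENNReal.ofReal r)⁻¹ * ν (ball x r) ≤ (ENNReal.ofReal r)⁻¹ * ν (closedBall x r) := by
        gcongr; exact ball_subset_closedBall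
      _ ≤ _ := ENNReal.inv_ofReal_mul_le_mul_div hK (hμ r)
  calc limsup (fun r => (ENNReal.ofReal r)⁻¹ * ν (ball x r)) (𝓝[>] 0)
      ≤ limsup (fun r => ENNReal.ofReal K * (ν (closedBall x r) / μ (closedBall x r)))
          (𝓝[>] 0) := limsup_le_limsup hbound
    _ = ENNReal.ofReal K * limsup (fun r => ν (closedBall x r) / μ (closedBall x r))
          (𝓝[>] 0) := ENNReal.limsup_const_mul_of_ne_top ENNReal.ofReal_ne_top
    _ < ∞ := ENNReal.mul_lt_top ENNReal.ofReal_lt_top hνμ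

/-- Let `γ : [0, sbar] → ℝ²` be a 1-Lipschitz curve such that
`|t − s| ≤ C·|γ(t) − γ(s)|` on `[0, sbar]` for some `C > 0`, and let `φ ∈ L¹(ℝ²)`.
Then for a.e. `s₀ ∈ [0, sbar]`,
`limsup_{r→0+} (1/r)·∫_{B(γ(s₀),r)} |φ| dx < +∞`. -/
theorem ae_limsup_ball_average_lt_top (sbar : ℝ) (γ : ℝ → Euc2)
    (hlip : LipschitzOnWith 1 γ (Icc (0 : ℝ) sbar))
    (C : ℝ) (hC : 0 < C)
    (hbilip : ∀ s ∈ Icc (0 : ℝ) sbar, ∀ t ∈ Icc (0 : ℝ) sbar, |t - s| ≤ C * ‖γ t - γ s‖)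
    (φ : Euc2 → ℝ) (hφ : Integrable φ) :
    ∀ᵐ s₀ ∂(volume.restrict (Icc (0 : ℝ) sbar)),
      Filter.limsup
        (fun r : ℝ => (ENNReal.ofReal r)⁻¹ * ∫⁻ x in ball (γ s₀) r, ENNReal.ofReal |φ x|)
        (𝓝[>] (0 : ℝ)) < ⊤ := by
  set ν := volume.withDensity fun x => ENNReal.ofReal |φ x|
  have : IsFiniteMeasure ν := isFiniteMeasure_withDensity_ofReal hφ.abs.hasFiniteIntegral
  have hγ : AEMeasurable γ (volume.restrict (Icc 0 sbar)) :=
    hlip.continuousOn.aemeasurable measurableSet_Icc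
  have hγ_dist : ∀ s ∈ Icc (0 : ℝ) sbar, ∀ t ∈ Icc (0 : ℝ) sbar,
      dist t s ≤ C * dist (γ t) (γ s) := fun s hs t ht => by
    rw [Real.dist_eq, dist_eq_norm]
    exact hbilip s hs t ht
  filter_upwards [ae_of_ae_map hγ (ae_limsup_measure_closedBall_div_lt_top ν _),
    ae_restrict_mem measurableSet_Icc] with s₀ hνμ hs₀
  simp_rw [← withDensity_apply _ measurableSet_ball]
  exact limsup_inv_mul_measure_ball_lt_top (mul_pos two_pos hC)
    (map_restrict_volume_closedBall_le measurableSet_Icc hγ hC.le hγ_dist hs₀) hνμ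
end
end

section
/- There exists an absolute constant C > 0 such that the following holds for all sufficiently small r > 0. Let κ ≥ 1 and let f ≥ 0 be a measurable function on the half plane ℝ²₊ = {y = (y₁,y₂) : y₁ > 0}, vanishing outside the half unit disc {|y| ≤ 1, y₁ > 0}, vanishing on {|y| ≤ r}, and satisfying ∫_{B(0,s)} f(y) dy ≤ κ·s for all s ∈ (0,1]. Then for every point x = (x₁, x₂) with x₁ = r/2 and |x₂| < r/6, one has (1/2π)·∫_{ℝ²₊} (ln|x − y′| − ln|x − y|)·f(y) dy ≤ C·r·κ·(1 + |ln r|), where y′ = (−y₁, y₂) denotes the reflection of y across the vertical axis. -/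
open MeasureTheory Filter Metric Set
open scoped ENNReal Topology

noncomputable section

/-- The point of `ℝ²` with coordinates `(a, b)`. -/
def pt (a b : ℝ) : Euc2 := (EuclideanSpace.equiv (Fin 2) ℝ).symm ![a, b]

/-- The reflection `y′ = (−y₁, y₂)` of `y` across the vertical axis. -/
def reflPt (y : Euc2) : Euc2 := pt (-(y 0)) (y 1)

lemma Real.log_sub_log_le_div_sq {a b : ℝ} (ha : 0 < a) (hb : 0 < b) :
    Real.log b - Real.log a ≤ (b ^ 2 - a ^ 2) / (2 * a ^ 2) := by
  have h : Real.log (b ^ 2 / a ^ 2) ≤ b ^ 2 / a ^ 2 - 1 :=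
    Real.log_le_sub_one_of_pos (by positivity)
  rw [Real.log_div (by positivity) (by positivity), Real.log_pow, Real.log_pow] at h
  have hsplit : b ^ 2 / a ^ 2 - 1 = 2 * ((b ^ 2 - a ^ 2) / (2 * a ^ 2)) := by
    field_simp
  push_cast at h
  linarith

lemma norm_sq_eq_sq_add_sq (v : EuclideanSpace ℝ (Fin 2)) : ‖v‖ ^ 2 = v 0 ^ 2 + v 1 ^ 2 := by
  rw [EuclideanSpace.real_norm_sq_eq, Fin.sum_univ_two]

lemma norm_sub_reflPt_sq (x y : Euc2) :
    ‖x - reflPt y‖ ^ 2 = ‖x - y‖ ^ 2 + 4 * x 0 * y 0 := by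
  simp only [norm_sq_eq_sq_add_sq, PiLp.sub_apply, reflPt, pt,
    PiLp.continuousLinearEquiv_symm_apply, Matrix.cons_val_zero, Matrix.cons_val_one,
    Matrix.cons_val_fin_one]
  ring

lemma log_norm_sub_reflPt_sub_log_norm_sub_le {x y : Euc2} (hx : 0 ≤ x 0) (hy : 0 ≤ y 0)
    (hxy : ‖x‖ < ‖y‖) :
    Real.log ‖x - reflPt y‖ - Real.log ‖x - y‖ ≤ 2 * x 0 * y 0 / (‖y‖ - ‖x‖) ^ 2 := by
  have hgap : ‖y‖ - ‖x‖ ≤ ‖x - y‖ := by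
    simpa [norm_sub_rev] using norm_sub_norm_le y x
  have ha : 0 < ‖x - y‖ := by linarith
  have hb : 0 < ‖x - reflPt y‖ := by
    have : 0 < ‖x - reflPt y‖ ^ 2 := by
      rw [norm_sub_reflPt_sq]; nlinarith [pow_pos ha 2, mul_nonneg hx hy]
    nlinarith [norm_nonneg (x - reflPt y)]
  calc Real.log ‖x - reflPt y‖ - Real.log ‖x - y‖
      ≤ (‖x - reflPt y‖ ^ 2 - ‖x - y‖ ^ 2) / (2 * ‖x - y‖ ^ 2) :=
        Real.log_sub_log_le_div_sq ha hb
    _ = 2 * x 0 * y 0 / ‖x - y‖ ^ 2 := by rw [norm_sub_reflPt_sq]; field_simp; ring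
    _ ≤ 2 * x 0 * y 0 / (‖y‖ - ‖x‖) ^ 2 := by gcongr

lemma log_norm_sub_reflPt_sub_log_norm_sub_le_five_mul_div {r : ℝ} (hr : 0 < r) {x y : Euc2}
    (hx0 : x 0 = r / 2) (hx1 : |x 1| < r / 6) (hy0 : 0 < y 0) (hyr : r ≤ ‖y‖) :
    Real.log ‖x - reflPt y‖ - Real.log ‖x - y‖ ≤ 5 * r / ‖y‖ := by
  have hy : 0 < ‖y‖ := hr.trans_le hyr
  -- `‖x‖ < (√10 / 6) r < (8 / 15) r`
  have hx : ‖x‖ < 8 / 15 * r := by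
    have : ‖x‖ ^ 2 < (8 / 15 * r) ^ 2 := by
      rw [norm_sq_eq_sq_add_sq, hx0, ← sq_abs (x 1)]
      nlinarith [abs_nonneg (x 1)]
    exact lt_of_pow_lt_pow_left₀ 2 (by positivity) this
  have hy0y : y 0 ≤ ‖y‖ := (le_abs_self _).trans (by simpa using PiLp.norm_apply_le y 0)
  have hgap : 7 / 15 * ‖y‖ ≤ ‖y‖ - ‖x‖ := by linarith
  calc Real.log ‖x - reflPt y‖ - Real.log ‖x - y‖
      ≤ 2 * x 0 * y 0 / (‖y‖ - ‖x‖) ^ 2 :=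
        log_norm_sub_reflPt_sub_log_norm_sub_le (by linarith) hy0.le (by linarith)
    _ ≤ 2 * (r / 2) * ‖y‖ / (7 / 15 * ‖y‖) ^ 2 := by rw [hx0]; gcongr
    _ ≤ 5 * r / ‖y‖ := by
      rw [div_le_div_iff₀ (by positivity) hy]
      nlinarith [mul_pos hr hy]

lemma ofReal_log_norm_sub_reflPt_sub_log_norm_sub_mul_le {r : ℝ} (hr : 0 < r) {x y : Euc2}
    (hx0 : x 0 = r / 2) (hx1 : |x 1| < r / 6) {c : ℝ} (hc : 0 ≤ c)
    (hy : c ≠ 0 → 0 < y 0 ∧ r ≤ ‖y‖) :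
    ENNReal.ofReal ((Real.log ‖x - reflPt y‖ - Real.log ‖x - y‖) * c)
      ≤ ENNReal.ofReal (5 * r) * ENNReal.ofReal (c / ‖y‖) := by
  rcases eq_or_ne c 0 with rfl | hc0
  · simp
  obtain ⟨hy0, hry⟩ := hy hc0
  rw [← ENNReal.ofReal_mul (by positivity), ← mul_div_assoc, mul_div_right_comm]
  exact ENNReal.ofReal_le_ofReal <| mul_le_mul_of_nonneg_right
    (log_norm_sub_reflPt_sub_log_norm_sub_le_five_mul_div hr hx0 hx1 hy0 hry) hc

lemma setLIntegral_dyadicShell_div_norm_le {E : Type*} [NormedAddCommGroup E] [MeasurableSpace E]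
    [OpensMeasurableSpace E] (μ : Measure E) {f : E → ℝ} {κ : ℝ} (hf : ∀ y, 0 ≤ f y)
    (hball : ∀ s ∈ Ioc (0 : ℝ) 1, ∫⁻ y in ball 0 s, ENNReal.ofReal (f y) ∂μ ≤ ENNReal.ofReal (κ * s))
    {n : ℤ} (hn : n < 0) :
    ∫⁻ y in (‖·‖ : E → ℝ) ⁻¹' Ico ((2 : ℝ) ^ n) (2 ^ (n + 1)), ENNReal.ofReal (f y / ‖y‖) ∂μ
      ≤ ENNReal.ofReal (2 * κ) := by
  set shell := (‖·‖ : E → ℝ) ⁻¹' Ico ((2 : ℝ) ^ n) (2 ^ (n + 1))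
  have hpos : (0 : ℝ) < 2 ^ n := by positivity
  calc ∫⁻ y in shell, ENNReal.ofReal (f y / ‖y‖) ∂μ
      ≤ ∫⁻ y in shell, ENNReal.ofReal (2 ^ (-n)) * ENNReal.ofReal (f y) ∂μ := by
        refine setLIntegral_mono' (measurable_norm measurableSet_Ico) fun y hy => ?_
        rw [← ENNReal.ofReal_mul (by positivity), zpow_neg, ← div_eq_inv_mul]
        exact ENNReal.ofReal_le_ofReal (div_le_div_of_nonneg_left (hf y) hpos hy.1)
    _ = ENNReal.ofReal (2 ^ (-n)) * ∫⁻ y in shell, ENNReal.ofReal (f y) ∂μ :=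
        lintegral_const_mul' _ _ ENNReal.ofReal_ne_top
    _ ≤ ENNReal.ofReal (2 ^ (-n)) * ∫⁻ y in ball 0 (2 ^ (n + 1)), ENNReal.ofReal (f y) ∂μ := by
        gcongr
        exact fun y hy => mem_ball_zero_iff.2 hy.2
    _ ≤ ENNReal.ofReal (2 ^ (-n)) * ENNReal.ofReal (κ * 2 ^ (n + 1)) := by
        gcongr
        exact hball _ ⟨by positivity, zpow_le_one_of_nonpos₀ one_le_two (by omega)⟩
    _ = ENNReal.ofReal (2 * κ) := by
        rw [← ENNReal.ofReal_mul (by positivity), zpow_add₀ two_ne_zero, zpow_neg]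
        field_simp

lemma card_Ico_intLog_two_le {r : ℝ} (hr : 0 < r) :
    ((Finset.Ico (Int.log 2 r) 0).card : ℝ) ≤ 1 + 2 * |Real.log r| := by
  set L := Int.log 2 r
  rcases le_or_gt L 0 with hL | hL
  · have hcard : ((Finset.Ico L 0).card : ℝ) = -L := by
      exact_mod_cast (Int.card_Ico_of_le L 0 hL).trans (zero_sub L)
    have hlt : Real.log r < (L + 1) * Real.log 2 := by
      have hzpow : Real.log (2 ^ (L + 1)) = (L + 1) * Real.log 2 := by
        rw [Real.log_zpow]; push_cast; ring
      rw [← hzpow]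
      exact Real.log_lt_log hr (by exact_mod_cast Int.lt_zpow_succ_log_self one_lt_two r)
    have hlog2 : 1 / 2 < Real.log 2 := by linarith [Real.log_two_gt_d9]
    rw [hcard]
    nlinarith [neg_abs_le (Real.log r), abs_nonneg (Real.log r)]
  · simp only [Finset.Ico_eq_empty_of_le hL.le, Finset.card_empty, Nat.cast_zero]
    positivity

lemma lintegral_ofReal_div_norm_le {E : Type*} [NormedAddCommGroup E] [MeasurableSpace E]
    [OpensMeasurableSpace E] (μ : Measure E) {f : E → ℝ} {κ r : ℝ} (hr : 0 < r) (hκ : 0 ≤ κ)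
    (hf : ∀ y, 0 ≤ f y)
    (hball : ∀ s ∈ Ioc (0 : ℝ) 1, ∫⁻ y in ball 0 s, ENNReal.ofReal (f y) ∂μ ≤ ENNReal.ofReal (κ * s))
    (hout : ∀ᵐ y ∂μ, f y ≠ 0 → ‖y‖ < 1) (hin : ∀ y, ‖y‖ < r → f y = 0) :
    ∫⁻ y, ENNReal.ofReal (f y / ‖y‖) ∂μ ≤ ENNReal.ofReal (4 * κ * (1 + |Real.log r|)) := by
  set S := Finset.Ico (Int.log 2 r) 0
  set shell : ℤ → Set E := fun n ↦ (‖·‖ : E → ℝ) ⁻¹' Ico ((2 : ℝ) ^ n) (2 ^ (n + 1))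
  set g : E → ℝ≥0∞ := fun y ↦ ENNReal.ofReal (f y / ‖y‖)
  have hshell : ∀ n, MeasurableSet (shell n) := fun n ↦ measurable_norm measurableSet_Ico
  have hcover : ∀ᵐ y ∂μ, g y ≤ (⋃ n : S, shell n).indicator g y := by
    filter_upwards [hout] with y hy
    by_cases hfy : f y = 0
    · simp [g, hfy]
    have hry : r ≤ ‖y‖ := not_lt.1 (mt (hin y) hfy)
    have hy0 : 0 < ‖y‖ := hr.trans_le hry
    set n := Int.log 2 ‖y‖
    have hmem : y ∈ shell n := by
      have hlo := Int.zpow_log_le_self one_lt_two hy0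
      have hhi := Int.lt_zpow_succ_log_self one_lt_two ‖y‖
      exact ⟨by exact_mod_cast hlo, by exact_mod_cast hhi⟩
    have hnS : n ∈ S := by
      refine Finset.mem_Ico.2 ⟨Int.log_mono_right hr hry, ?_⟩
      by_contra! hn
      have := one_le_zpow₀ (one_le_two : (1 : ℝ) ≤ 2) hn
      exact absurd (hy hfy) (not_lt.2 (this.trans (by exact_mod_cast hmem.1)))
    rw [indicator_of_mem (mem_iUnion.2 ⟨⟨n, hnS⟩, hmem⟩)]
  calc ∫⁻ y, g y ∂μ ≤ ∫⁻ y, (⋃ n : S, shell n).indicator g y ∂μ := lintegral_mono_ae hcover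
    _ = ∫⁻ y in ⋃ n : S, shell n, g y ∂μ :=
        lintegral_indicator (MeasurableSet.iUnion fun n : S ↦ hshell n) g
    _ ≤ ∑' n : S, ∫⁻ y in shell n, g y ∂μ := lintegral_iUnion_le _ _
    _ ≤ ∑' _ : S, ENNReal.ofReal (2 * κ) := ENNReal.tsum_le_tsum fun n ↦
        setLIntegral_dyadicShell_div_norm_le μ hf hball (Finset.mem_Ico.1 n.2).2
    _ = ENNReal.ofReal (S.card * (2 * κ)) := by
        rw [tsum_fintype, Finset.sum_const, Finset.card_univ, Fintype.card_coe, nsmul_eq_mul,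
          ENNReal.ofReal_mul (Nat.cast_nonneg _), ENNReal.ofReal_natCast]
    _ ≤ ENNReal.ofReal (4 * κ * (1 + |Real.log r|)) := by
        apply ENNReal.ofReal_le_ofReal
        nlinarith [card_Ico_intLog_two_le hr]

/-- There is an absolute constant `C > 0` such that, for all sufficiently small `r > 0`,
for every `κ ≥ 1` and every measurable `f ≥ 0` on the half plane `{y₁ > 0}` vanishing
outside the half unit disc, vanishing on `{|y| ≤ r}` and satisfying
`∫_{B(0,s)} f ≤ κ·s` for `s ∈ (0,1]`, and for every point `x = (r/2, x₂)` with `|x₂| < r/6`,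
the half-plane Green's potential satisfies
`(1/2π)·∫_{ℝ²₊} (ln|x−y′| − ln|x−y|)·f(y) dy ≤ C·r·κ·(1 + |ln r|)`. -/
theorem green_potential_pointwise_bound :
    ∃ C > (0 : ℝ), ∃ rstar > (0 : ℝ), ∀ r ∈ Ioo (0 : ℝ) rstar, ∀ κ : ℝ, 1 ≤ κ →
      ∀ f : Euc2 → ℝ, Measurable f → (∀ y, 0 ≤ f y) →
        (∀ y : Euc2, ¬(‖y‖ ≤ 1 ∧ 0 < y 0) → f y = 0) →
        (∀ y : Euc2, ‖y‖ ≤ r → f y = 0) →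
        (∀ s ∈ Ioc (0 : ℝ) 1,
          ∫⁻ y in ball (0 : Euc2) s, ENNReal.ofReal (f y) ≤ ENNReal.ofReal (κ * s)) →
        ∀ x : Euc2, x 0 = r / 2 → |x 1| < r / 6 →
          (∫⁻ y in {y : Euc2 | 0 < y 0},
              ENNReal.ofReal ((Real.log ‖x - reflPt y‖ - Real.log ‖x - y‖) * f y))
            / ENNReal.ofReal (2 * Real.pi)
          ≤ ENNReal.ofReal (C * r * κ * (1 + |Real.log r|)) := by
  refine ⟨20, by norm_num, 1, one_pos, ?_⟩
  rintro r ⟨hr, -⟩ κ hκ f - hf hsupp hvan hmass x hx0 hx1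
  have hout : ∀ᵐ y ∂(volume : Measure Euc2), f y ≠ 0 → ‖y‖ < 1 := by
    filter_upwards [measure_eq_zero_iff_ae_notMem.1 (Measure.addHaar_sphere volume (0 : Euc2) 1)]
      with y hy hfy
    have hy1 := (not_not.1 (mt (hsupp y) hfy)).1
    exact lt_of_le_of_ne hy1 (by simpa using hy)
  have hkernel : ∀ y, ENNReal.ofReal ((Real.log ‖x - reflPt y‖ - Real.log ‖x - y‖) * f y)
      ≤ ENNReal.ofReal (5 * r) * ENNReal.ofReal (f y / ‖y‖) := fun y ↦
    ofReal_log_norm_sub_reflPt_sub_log_norm_sub_mul_le hr hx0 hx1 (hf y) fun hfy ↦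
      ⟨(not_not.1 (mt (hsupp y) hfy)).2, (not_le.1 (mt (hvan y) hfy)).le⟩
  have h2pi : 1 ≤ ENNReal.ofReal (2 * Real.pi) :=
    ENNReal.one_le_ofReal.2 (by nlinarith [Real.pi_gt_three])
  refine ENNReal.div_le_of_le_mul (le_mul_of_one_le_right' h2pi |>.trans' ?_)
  calc ∫⁻ y in {y : Euc2 | 0 < y 0},
        ENNReal.ofReal ((Real.log ‖x - reflPt y‖ - Real.log ‖x - y‖) * f y)
      ≤ ∫⁻ y, ENNReal.ofReal (5 * r) * ENNReal.ofReal (f y / ‖y‖) :=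
        (setLIntegral_le_lintegral _ _).trans (lintegral_mono hkernel)
    _ = ENNReal.ofReal (5 * r) * ∫⁻ y, ENNReal.ofReal (f y / ‖y‖) :=
        lintegral_const_mul' _ _ ENNReal.ofReal_ne_top
    _ ≤ ENNReal.ofReal (5 * r) * ENNReal.ofReal (4 * κ * (1 + |Real.log r|)) := by
        gcongr
        exact lintegral_ofReal_div_norm_le volume hr (by linarith) hf hmass hout
          fun y hy ↦ hvan y hy.le
    _ = ENNReal.ofReal (20 * r * κ * (1 + |Real.log r|)) := by
        rw [← ENNReal.ofReal_mul (by positivity)]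
        ring_nf
end
end

section
/- There exist constants C > 0 and r* > 0 such that the following holds. Let x₁ ∈ (0, r*) and let f ≥ 0 be an integrable function on the half plane ℝ²₊ = {y = (y₁,y₂) : y₁ > 0} which vanishes outside the set {y ∈ ℝ²₊ : |y| ≤ 2x₁}. Then the integral over x₂ ∈ ℝ of the half-plane Green's potential, U(x₁) = (1/2π)·∫_ℝ ∫_{ℝ²₊} (ln|x − y′| − ln|x − y|)·f(y) dy dx₂ with x = (x₁, x₂) and y′ = (−y₁, y₂), satisfies U(x₁) ≤ C·x₁·|ln x₁|·‖f‖_{L¹}. -/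
open MeasureTheory Filter Metric Set
open scoped ENNReal Topology

noncomputable section

open intervalIntegral

lemma pt_sub (a b : ℝ) (y : Euc2) : pt a b - y = pt (a - y 0) (b - y 1) := by
  ext i; fin_cases i <;> rfl

lemma norm_pt (a b : ℝ) : ‖pt a b‖ = Real.sqrt (a^2 + b^2) := by
  rw [EuclideanSpace.norm_eq]
  simp [Fin.sum_univ_two, Real.norm_eq_abs, sq_abs, pt]


set_option maxHeartbeats 2000000 in
lemma oneDim (x₁ a : ℝ) (hx : 0 < x₁) (hx10 : x₁ < 1/10) (ha : 0 < a) (ha2 : a ≤ 2*x₁) :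
    ∫⁻ z : ℝ, ENNReal.ofReal (Real.log (Real.sqrt ((x₁+a)^2 + z^2))
      - Real.log (Real.sqrt ((x₁-a)^2 + z^2)))
      ≤ ENNReal.ofReal (100 * x₁ * |Real.log x₁|) := by
  set L : ℝ := |Real.log x₁| with hLdef
  have hlogneg : Real.log x₁ < 0 := Real.log_neg hx (by linarith)
  have hLeq : L = -Real.log x₁ := abs_of_neg hlogneg
  have he : Real.exp 1 < 2.7182818286 := Real.exp_one_lt_d9
  have he0 : 0 < Real.exp 1 := Real.exp_pos 1
  have hL2 : 2 < L := by
    rw [hLeq]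
    have hxe : x₁ < Real.exp (-2) := by
      have h2 : Real.exp (-2) = (Real.exp 1 * Real.exp 1)⁻¹ := by
        rw [Real.exp_neg]; congr 1
        rw [show (2:ℝ) = 1 + 1 by norm_num, Real.exp_add]
      rw [h2]
      have h10 : Real.exp 1 * Real.exp 1 < 10 := by nlinarith
      have : (10:ℝ)⁻¹ < (Real.exp 1 * Real.exp 1)⁻¹ := by
        apply inv_strictAnti₀ (by positivity) h10
      linarith
    have := (Real.log_lt_iff_lt_exp hx).2 hxe
    linarith
  have hL0 : 0 < L := by linarith
  set p : ℝ := L⁻¹ with hpdef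
  have hp0 : 0 < p := by positivity
  have hpL : p * L = 1 := inv_mul_cancel₀ (ne_of_gt hL0)
  have hp1 : p < 1/2 := by
    have := inv_strictAnti₀ (by norm_num : (0:ℝ) < 2) hL2; simpa using this
  set c : ℝ := 3 * x₁ with hcdef
  have hc0 : 0 < c := by positivity
  set G : ℝ → ℝ≥0∞ := fun z => ENNReal.ofReal (Real.log (Real.sqrt ((x₁+a)^2 + z^2))
      - Real.log (Real.sqrt ((x₁-a)^2 + z^2))) with hGdef
  have hGm : Measurable G := by
    apply Measurable.ennreal_ofReal
    exact ((Real.measurable_log.comp (by fun_prop)).sub (Real.measurable_log.comp (by fun_prop)))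
  have hev : ∀ z : ℝ, G (-z) = G z := by intro z; simp only [hGdef, neg_sq]
  -- near bound
  have hnear : ∫⁻ z in Ioc 0 c, G z ≤ ENNReal.ofReal (20 * x₁ * L - 2 * x₁) := by
    have hstep : ∫⁻ z in Ioc 0 c, G z ≤ ∫⁻ z in Ioc 0 c, ENNReal.ofReal (L * z ^ (-p)) := by
      apply setLIntegral_mono (by fun_prop) ?_
      intro z hz
      apply ENNReal.ofReal_le_ofReal
      have hz0 : 0 < z := hz.1
      have hzc : z ≤ c := hz.2
      have hPnn : (0:ℝ) ≤ (x₁+a)^2 + z^2 := by positivity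
      have hQ0 : (0:ℝ) < (x₁-a)^2 + z^2 := by positivity
      rw [Real.log_sqrt hPnn, Real.log_sqrt (le_of_lt hQ0)]
      have h1 : Real.log ((x₁+a)^2 + z^2) ≤ 0 := by
        apply Real.log_nonpos hPnn; nlinarith
      have h2 : 2 * Real.log z ≤ Real.log ((x₁-a)^2 + z^2) := by
        have := (Real.log_le_log_iff (by positivity : (0:ℝ) < z^2) hQ0).2 (by nlinarith)
        simpa [Real.log_pow] using this
      have h3 : -Real.log z ≤ L * z ^ (-p) := by
        have k1 : Real.log (z ^ (-p)) = -p * Real.log z := Real.log_rpow hz0 _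
        have k2 : Real.log (z ^ (-p)) ≤ z ^ (-p) - 1 :=
          Real.log_le_sub_one_of_pos (Real.rpow_pos_of_pos hz0 _)
        have k3 : -p * Real.log z ≤ z ^ (-p) := by rw [← k1]; linarith
        have k4 := mul_le_mul_of_nonneg_left k3 (le_of_lt hL0)
        have k5 : L * (-p * Real.log z) = -Real.log z := by
          linear_combination (-Real.log z) * hpL
        linarith
      linarith
    have hval : ∫⁻ z in Ioc 0 c, ENNReal.ofReal (L * z ^ (-p)) =
        ENNReal.ofReal (L * (c ^ (1 - p) / (1 - p))) := by
      have hii : IntervalIntegrable (fun x : ℝ => x ^ (-p)) volume 0 c :=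
        intervalIntegrable_rpow' (by linarith)
      have hint : IntegrableOn (fun z : ℝ => L * z ^ (-p)) (Ioc 0 c) := by
        have := (intervalIntegrable_iff_integrableOn_Ioc_of_le (le_of_lt hc0)).1 hii
        exact this.const_mul L
      have hnn : 0 ≤ᵐ[volume.restrict (Ioc 0 c)] fun z : ℝ => L * z ^ (-p) := by
        filter_upwards [ae_restrict_mem measurableSet_Ioc] with z hz
        exact mul_nonneg (le_of_lt hL0) (Real.rpow_nonneg (le_of_lt hz.1) _)
      rw [← ofReal_integral_eq_lintegral_ofReal hint hnn]
      congr 1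
      rw [MeasureTheory.integral_const_mul, ← intervalIntegral.integral_of_le (le_of_lt hc0),
        integral_rpow (Or.inl (by linarith))]
      rw [Real.zero_rpow (by linarith)]
      ring_nf

    -- conclude near bound
    have hce : c ^ (1 - p) ≤ c * Real.exp 1 := by
      have e1 : c ^ (1 - p) = c * c ^ (-p) := by
        rw [show (1 - p) = 1 + (-p) by ring, Real.rpow_add hc0, Real.rpow_one]
      have e2 : c ^ (-p) ≤ Real.exp 1 := by
        rw [Real.rpow_def_of_pos hc0]
        apply Real.exp_le_exp.2
        have hlc : Real.log x₁ ≤ Real.log c :=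
          (Real.log_le_log_iff hx hc0).2 (by linarith)
        have : Real.log c * (-p) ≤ Real.log x₁ * (-p) := by nlinarith
        have : Real.log x₁ * (-p) = 1 := by
          rw [hLeq] at hpL; linear_combination hpL
        linarith
      calc c ^ (1 - p) = c * c ^ (-p) := e1
        _ ≤ c * Real.exp 1 := by nlinarith [Real.rpow_nonneg hc0.le (-p)]
    have hinv2 : (1 - p)⁻¹ ≤ 2 := by
      have h12 : (1:ℝ)/2 ≤ 1 - p := by linarith
      have := one_div_le_one_div_of_le (by norm_num : (0:ℝ) < 1/2) h12
      rw [one_div] at this; linarith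
    have hreal : L * (c ^ (1 - p) / (1 - p)) ≤ 20 * x₁ * L - 2 * x₁ := by
      have hA0 : 0 ≤ c ^ (1 - p) := Real.rpow_nonneg hc0.le _
      have h1 : c ^ (1 - p) / (1 - p) ≤ 2 * (c * Real.exp 1) := by
        rw [div_eq_mul_inv]
        nlinarith
      have h2 := mul_le_mul_of_nonneg_left h1 hL0.le
      have h3 : L * (2 * (c * Real.exp 1)) ≤ 6 * 2.7182818286 * (x₁ * L) := by
        rw [hcdef]; nlinarith [mul_nonneg hx.le hL0.le]
      nlinarith [mul_nonneg hx.le hL0.le]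
    calc ∫⁻ z in Ioc 0 c, G z ≤ ∫⁻ z in Ioc 0 c, ENNReal.ofReal (L * z ^ (-p)) := hstep
      _ = ENNReal.ofReal (L * (c ^ (1 - p) / (1 - p))) := hval
      _ ≤ ENNReal.ofReal (20 * x₁ * L - 2 * x₁) := ENNReal.ofReal_le_ofReal hreal

  -- far bound
  have hfar : ∫⁻ z in Ioi c, G z ≤ ENNReal.ofReal (2 * x₁) := by
    have hstep : ∫⁻ z in Ioi c, G z ≤ ∫⁻ z in Ioi c, ENNReal.ofReal (4 * x₁^2 * z ^ (-2:ℝ)) := by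
      apply setLIntegral_mono (by fun_prop) ?_
      intro z hz
      apply ENNReal.ofReal_le_ofReal
      have hz0 : 0 < z := lt_trans hc0 hz
      have hP0 : (0:ℝ) < (x₁+a)^2 + z^2 := by positivity
      have hQ0 : (0:ℝ) < (x₁-a)^2 + z^2 := by positivity
      rw [Real.log_sqrt hP0.le, Real.log_sqrt hQ0.le]
      have hlogdiv : Real.log (((x₁+a)^2 + z^2)/((x₁-a)^2 + z^2))
          = Real.log ((x₁+a)^2 + z^2) - Real.log ((x₁-a)^2 + z^2) :=
        Real.log_div hP0.ne' hQ0.ne'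
      have hub : Real.log (((x₁+a)^2 + z^2)/((x₁-a)^2 + z^2))
          ≤ ((x₁+a)^2 + z^2)/((x₁-a)^2 + z^2) - 1 :=
        Real.log_le_sub_one_of_pos (by positivity)
      have hid : ((x₁+a)^2 + z^2)/((x₁-a)^2 + z^2) - 1 = (4*x₁*a)/((x₁-a)^2 + z^2) := by
        have h4 : ((x₁+a)^2 + z^2) - ((x₁-a)^2 + z^2) = 4*x₁*a := by ring
        rw [← h4, sub_div, div_self hQ0.ne']
      have hmono : (4*x₁*a)/((x₁-a)^2 + z^2) ≤ (8*x₁^2)/(z^2) :=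
        div_le_div₀ (by positivity) (by nlinarith) (by positivity) (by nlinarith)
      have hz2 : z ^ (-2:ℝ) = (z^2)⁻¹ := by
        rw [show (-2:ℝ) = -((2:ℕ):ℝ) by norm_num, Real.rpow_neg hz0.le, Real.rpow_natCast]
      rw [hz2]
      have hfin : Real.log ((x₁+a)^2 + z^2) - Real.log ((x₁-a)^2 + z^2) ≤ (8*x₁^2)/(z^2) := by
        rw [← hlogdiv]; linarith
      rw [div_eq_mul_inv] at hfin
      linarith
    have hval : ∫⁻ z in Ioi c, ENNReal.ofReal (4 * x₁^2 * z ^ (-2:ℝ)) =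
        ENNReal.ofReal (4 * x₁^2 * c⁻¹) := by
      have hint : IntegrableOn (fun z : ℝ => 4 * x₁^2 * z ^ (-2:ℝ)) (Ioi c) :=
        (integrableOn_Ioi_rpow_of_lt (by norm_num) hc0).const_mul _
      have hnn : 0 ≤ᵐ[volume.restrict (Ioi c)] fun z : ℝ => 4 * x₁^2 * z ^ (-2:ℝ) := by
        filter_upwards [ae_restrict_mem measurableSet_Ioi] with z hz
        exact mul_nonneg (by positivity) (Real.rpow_nonneg (le_of_lt (lt_trans hc0 hz)) _)
      rw [← ofReal_integral_eq_lintegral_ofReal hint hnn]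
      congr 1
      rw [MeasureTheory.integral_const_mul, integral_Ioi_rpow_of_lt (by norm_num) hc0]
      norm_num [Real.rpow_neg_one]
    calc ∫⁻ z in Ioi c, G z ≤ ∫⁻ z in Ioi c, ENNReal.ofReal (4 * x₁^2 * z ^ (-2:ℝ)) := hstep
      _ = ENNReal.ofReal (4 * x₁^2 * c⁻¹) := hval
      _ ≤ ENNReal.ofReal (2 * x₁) := by
          apply ENNReal.ofReal_le_ofReal
          rw [hcdef]
          rw [mul_inv_le_iff₀ (by positivity)]  -- maybe wrong; fallback below
          nlinarith
  -- combine over Ioi 0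
  have hIoi : ∫⁻ z in Ioi (0:ℝ), G z ≤ ENNReal.ofReal (20 * x₁ * L) := by
    have hsplit : ∫⁻ z in Ioi (0:ℝ), G z
        = (∫⁻ z in Ioc 0 c, G z) + ∫⁻ z in Ioi c, G z := by
      rw [← Ioc_union_Ioi_eq_Ioi hc0.le,
        lintegral_union measurableSet_Ioi (Ioc_disjoint_Ioi le_rfl)]
    rw [hsplit]
    calc (∫⁻ z in Ioc 0 c, G z) + ∫⁻ z in Ioi c, G z
        ≤ ENNReal.ofReal (20 * x₁ * L - 2 * x₁) + ENNReal.ofReal (2 * x₁) :=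
          add_le_add hnear hfar
      _ = ENNReal.ofReal (20 * x₁ * L) := by
          rw [← ENNReal.ofReal_add (by nlinarith) (by positivity)]
          ring_nf
  -- reflect
  have hIio : ∫⁻ z in Iio (0:ℝ), G z = ∫⁻ z in Ioi (0:ℝ), G z := by
    have h1 : ∫⁻ z in Ioi (0:ℝ), G z = ∫⁻ z in Ioi (0:ℝ), G z ∂(Measure.map Neg.neg volume) := by
      rw [Measure.map_neg_eq_self]
    rw [h1, setLIntegral_map measurableSet_Ioi hGm measurable_neg]
    have h2 : (Neg.neg ⁻¹' Ioi (0:ℝ)) = Iio 0 := by ext x; simp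
    simp_rw [h2, hev]
  have hIci : ∫⁻ z in Ici (0:ℝ), G z = ∫⁻ z in Ioi (0:ℝ), G z := by
    rw [← restrict_Ioi_eq_restrict_Ici]
  calc ∫⁻ z, G z = (∫⁻ z in Iio (0:ℝ), G z) + ∫⁻ z in Ici 0, G z := by
        rw [← compl_Iio (a := (0:ℝ))]; exact (lintegral_add_compl G measurableSet_Iio).symm
    _ ≤ ENNReal.ofReal (20 * x₁ * L) + ENNReal.ofReal (20 * x₁ * L) := by
        rw [hIio, hIci]; exact add_le_add hIoi hIoi
    _ ≤ ENNReal.ofReal (100 * x₁ * L) := by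
        rw [← ENNReal.ofReal_add (by nlinarith) (by nlinarith)]
        apply ENNReal.ofReal_le_ofReal; nlinarith


/-- There exist constants `C > 0` and `r* > 0` such that: for every `x₁ ∈ (0, r*)` and
every integrable `f ≥ 0` on the half plane `{y₁ > 0}` vanishing outside `{|y| ≤ 2x₁, y₁ > 0}`,
the integral over `x₂ ∈ ℝ` of the half-plane Green's potential,
`U(x₁) = (1/2π)·∫_ℝ ∫_{ℝ²₊} (ln|x−y′| − ln|x−y|)·f(y) dy dx₂` with `x = (x₁,x₂)`,
satisfies `U(x₁) ≤ C·x₁·|ln x₁|·‖f‖_{L¹}`. -/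
theorem green_potential_integrated_bound :
    ∃ C > (0 : ℝ), ∃ rstar > (0 : ℝ), ∀ x₁ ∈ Ioo (0 : ℝ) rstar,
      ∀ f : Euc2 → ℝ, Measurable f → (∀ y, 0 ≤ f y) → Integrable f →
        (∀ y : Euc2, ¬(0 < y 0 ∧ ‖y‖ ≤ 2 * x₁) → f y = 0) →
        (∫⁻ x₂ : ℝ, ∫⁻ y in {y : Euc2 | 0 < y 0},
            ENNReal.ofReal ((Real.log ‖pt x₁ x₂ - reflPt y‖
              - Real.log ‖pt x₁ x₂ - y‖) * f y))
          / ENNReal.ofReal (2 * Real.pi)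
        ≤ ENNReal.ofReal (C * x₁ * |Real.log x₁|)
            * ∫⁻ y in {y : Euc2 | 0 < y 0}, ENNReal.ofReal (f y) := by
  refine ⟨100, by norm_num, 1/10, by norm_num, ?_⟩
  rintro x₁ ⟨hx0, hx10⟩ f hfm hf0 hfi hsupp
  -- continuity facts
  have hptc : Continuous fun q : ℝ × ℝ => pt q.1 q.2 := by
    apply (EuclideanSpace.equiv (Fin 2) ℝ).symm.continuous.comp
    apply continuous_pi
    intro i
    fin_cases i
    · simpa using continuous_fst
    · simpa using continuous_snd
  have hcoord : ∀ i : Fin 2, Continuous fun y : Euc2 => y i := fun i =>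
    (continuous_apply i).comp (EuclideanSpace.equiv (Fin 2) ℝ).continuous
  have hrefl : Continuous reflPt :=
    hptc.comp (((hcoord 0).neg).prodMk (hcoord 1))
  have hn1 : Continuous fun q : ℝ × Euc2 => ‖pt x₁ q.1 - reflPt q.2‖ :=
    ((hptc.comp (continuous_const.prodMk continuous_fst)).sub
      (hrefl.comp continuous_snd)).norm
  have hn2 : Continuous fun q : ℝ × Euc2 => ‖pt x₁ q.1 - q.2‖ :=
    ((hptc.comp (continuous_const.prodMk continuous_fst)).sub continuous_snd).norm
  have hmeas : Measurable (Function.uncurry fun (x₂ : ℝ) (y : Euc2) =>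
      ENNReal.ofReal ((Real.log ‖pt x₁ x₂ - reflPt y‖ - Real.log ‖pt x₁ x₂ - y‖) * f y)) := by
    apply Measurable.ennreal_ofReal
    exact (((Real.measurable_log.comp hn1.measurable).sub
      (Real.measurable_log.comp hn2.measurable)).mul (hfm.comp measurable_snd))
  -- drop the division by 2π
  have h2pi : (1:ℝ≥0∞) ≤ ENNReal.ofReal (2 * Real.pi) := by
    apply ENNReal.one_le_ofReal.2
    nlinarith [Real.pi_gt_three]
  have hdrop : (∫⁻ x₂ : ℝ, ∫⁻ y in {y : Euc2 | 0 < y 0},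
        ENNReal.ofReal ((Real.log ‖pt x₁ x₂ - reflPt y‖
          - Real.log ‖pt x₁ x₂ - y‖) * f y)) / ENNReal.ofReal (2 * Real.pi)
      ≤ ∫⁻ x₂ : ℝ, ∫⁻ y in {y : Euc2 | 0 < y 0},
        ENNReal.ofReal ((Real.log ‖pt x₁ x₂ - reflPt y‖
          - Real.log ‖pt x₁ x₂ - y‖) * f y) := by
    rw [div_eq_mul_inv]
    calc _ ≤ (∫⁻ x₂ : ℝ, ∫⁻ y in {y : Euc2 | 0 < y 0},
        ENNReal.ofReal ((Real.log ‖pt x₁ x₂ - reflPt y‖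
          - Real.log ‖pt x₁ x₂ - y‖) * f y)) * 1 :=
          mul_le_mul_right (ENNReal.inv_le_one.2 h2pi) _
      _ = _ := mul_one _
  refine le_trans hdrop ?_
  rw [lintegral_lintegral_swap hmeas.aemeasurable]
  have hkey : ∀ y : Euc2, (∫⁻ x₂ : ℝ, ENNReal.ofReal ((Real.log ‖pt x₁ x₂ - reflPt y‖
        - Real.log ‖pt x₁ x₂ - y‖) * f y))
      ≤ ENNReal.ofReal (100 * x₁ * |Real.log x₁|) * ENNReal.ofReal (f y) := by
    intro y
    by_cases hfy : f y = 0
    · simp [hfy]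
    · have hmem : 0 < y 0 ∧ ‖y‖ ≤ 2 * x₁ := by
        by_contra h; exact hfy (hsupp y h)
      obtain ⟨hy0, hynorm⟩ := hmem
      have hy2 : y 0 ≤ 2 * x₁ := by
        have hyeq : y = pt (y 0) (y 1) := by ext i; fin_cases i <;> rfl
        have hyn : ‖y‖ = Real.sqrt ((y 0)^2 + (y 1)^2) := by
          conv_lhs => rw [hyeq]
          rw [norm_pt]
        rw [hyn] at hynorm
        nlinarith [Real.sq_sqrt (by positivity : (0:ℝ) ≤ (y 0)^2 + (y 1)^2),
          Real.sqrt_nonneg ((y 0)^2 + (y 1)^2)]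
      have e1 : ∀ x₂ : ℝ, ‖pt x₁ x₂ - reflPt y‖
          = Real.sqrt ((x₁ + y 0)^2 + (x₂ - y 1)^2) := by
        intro x₂
        rw [pt_sub, show reflPt y 0 = -(y 0) from rfl, show reflPt y 1 = y 1 from rfl,
          sub_neg_eq_add, norm_pt]
      have e2 : ∀ x₂ : ℝ, ‖pt x₁ x₂ - y‖
          = Real.sqrt ((x₁ - y 0)^2 + (x₂ - y 1)^2) := by
        intro x₂; rw [pt_sub, norm_pt]
      simp_rw [e1, e2, ENNReal.ofReal_mul' (hf0 y)]
      have hmz : Measurable fun x₂ : ℝ => ENNReal.ofReal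
          (Real.log (Real.sqrt ((x₁ + y 0)^2 + (x₂ - y 1)^2))
            - Real.log (Real.sqrt ((x₁ - y 0)^2 + (x₂ - y 1)^2))) := by
        apply Measurable.ennreal_ofReal
        exact (Real.measurable_log.comp (by fun_prop)).sub
          (Real.measurable_log.comp (by fun_prop))
      rw [lintegral_mul_const _ hmz]
      apply mul_le_mul_left
      have htr := lintegral_sub_right_eq_self (fun z : ℝ => ENNReal.ofReal
        (Real.log (Real.sqrt ((x₁ + y 0)^2 + z^2))
          - Real.log (Real.sqrt ((x₁ - y 0)^2 + z^2)))) (y 1) (μ := volume)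
      calc (∫⁻ x₂ : ℝ, ENNReal.ofReal
            (Real.log (Real.sqrt ((x₁ + y 0)^2 + (x₂ - y 1)^2))
              - Real.log (Real.sqrt ((x₁ - y 0)^2 + (x₂ - y 1)^2))))
          = ∫⁻ z : ℝ, ENNReal.ofReal (Real.log (Real.sqrt ((x₁ + y 0)^2 + z^2))
              - Real.log (Real.sqrt ((x₁ - y 0)^2 + z^2))) := htr
        _ ≤ ENNReal.ofReal (100 * x₁ * |Real.log x₁|) :=
            oneDim x₁ (y 0) hx0 hx10 hy0 hy2
  calc ∫⁻ y in {y : Euc2 | 0 < y 0}, ∫⁻ x₂ : ℝ,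
        ENNReal.ofReal ((Real.log ‖pt x₁ x₂ - reflPt y‖
          - Real.log ‖pt x₁ x₂ - y‖) * f y)
      ≤ ∫⁻ y in {y : Euc2 | 0 < y 0},
          ENNReal.ofReal (100 * x₁ * |Real.log x₁|) * ENNReal.ofReal (f y) :=
        lintegral_mono hkey
    _ = ENNReal.ofReal (100 * x₁ * |Real.log x₁|)
          * ∫⁻ y in {y : Euc2 | 0 < y 0}, ENNReal.ofReal (f y) :=
        lintegral_const_mul _ hfm.ennreal_ofReal
end
end

section
/- Let δ ∈ (0, π/2), set p = 1 + 2δ/π, and let D_δ ⊂ ℝ² be the circular sector of radius 1 given in polar coordinates by D_δ = {(r,θ) : 0 ≤ r ≤ 1, −π/2 − δ ≤ θ ≤ π/2 + δ}. Then there exists a constant C > 0 such that any function Φ₁ which is continuous on D_δ, harmonic in the interior of D_δ, and equal to |x| on ∂D_δ satisfies |Φ₁(x)| ≤ C·|x|^{1/p} for all x ∈ D_δ. Equivalently, the harmonic function v on the half disc D′ = {(r,θ) : 0 ≤ r ≤ 1, −π/2 ≤ θ ≤ π/2} with boundary values v(x) = |x|^p on ∂D′ satisfies |v(x)| ≤ C·|x|,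 and Φ₁(z) = v(z^{1/p}) under the conformal map z ↦ z^p (in polar coordinates (r,θ) ↦ (r^p, pθ)) which takes D′ onto D_δ. -/
/-!
Let `T = π/2 + δ` and `γ = π/(2T)`, so that `Re z^γ = |z|^γ cos (γ arg z)` is harmonic on the
sector `|arg z| ≤ T` and vanishes on its edges. For boundary data `|z|^{pγ}` with `p ≥ 1` and
`cos (pπ/2) < 0`, the harmonic function `w = Re ((πp/2) z^γ - z^{pγ}) / (-cos (pπ/2))` dominates
`|z|^{pγ}` on the whole sector (by the Lipschitz bound for `cos` and Jordan's inequality) and is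
`O(|z|^γ)`, so the weak maximum principle gives `|u| ≤ w`. Part (i) is the case `γ = 1/p`,
`pγ = 1` on `D_δ`, part (ii) the case `γ = 1` on `D′`; in both, `cos (pπ/2) = -sin δ`.
-/

open Set

noncomputable section

/-- The closed circular sector of radius 1 and half-opening angle `π/2 + δ`, given in polar
coordinates by `D_δ = {(ρ,θ) : 0 ≤ ρ ≤ 1, |θ| ≤ π/2 + δ}`, viewed as a subset of `ℂ ≅ ℝ²`.
For `δ = 0` this is the (closed) right half disc `D′`. -/
def sector (δ : ℝ) : Set ℂ :=
  {z : ℂ | ‖z‖ ≤ 1 ∧ |Complex.arg z| ≤ Real.pi / 2 + δ}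

/-- The Laplacian of `Φ : ℂ → ℝ` (viewing `ℂ` as `ℝ²` with orthonormal basis `1, i`):
the sum of the two pure second directional derivatives. -/
def lap (Φ : ℂ → ℝ) (x : ℂ) : ℝ :=
  fderiv ℝ (fun y => fderiv ℝ Φ y 1) x 1
    + fderiv ℝ (fun y => fderiv ℝ Φ y Complex.I) x Complex.I

open Filter Topology InnerProductSpace Laplacian Real

theorem IsLocalMax.deriv_deriv_nonpos {g : ℝ → ℝ} {t : ℝ} (h : IsLocalMax g t)
    (hc : ContinuousAt g t) : deriv (deriv g) t ≤ 0 := by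
  by_contra! hpos
  have hconst : g =ᶠ[𝓝 t] fun _ => g t :=
    (h.and (isLocalMin_of_deriv_deriv_pos hpos h.deriv_eq_zero hc)).mono
      fun _ hs => le_antisymm hs.1 hs.2
  have hderiv : deriv g =ᶠ[𝓝 t] fun _ => 0 := by
    filter_upwards [hconst.eventuallyEq_nhds] with s hs
    rw [hs.deriv_eq, deriv_const]
  rw [hderiv.deriv_eq, deriv_const] at hpos
  exact lt_irrefl _ hpos

section SecondDerivative

variable {E : Type*} [NormedAddCommGroup E] [NormedSpace ℝ E] {x : E}

theorem ContDiffAt.fderiv_fderiv_apply_eq_iteratedFDeriv {F : Type*} [NormedAddCommGroup F]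
    [NormedSpace ℝ F] {f : E → F} (hf : ContDiffAt ℝ 2 f x) (e e' : E) :
    fderiv ℝ (fun y => fderiv ℝ f y e) x e' = iteratedFDeriv ℝ 2 f x ![e', e] := by
  have hd : DifferentiableAt ℝ (fderiv ℝ f) x :=
    (hf.fderiv_right (m := 1) (by norm_num)).differentiableAt one_ne_zero
  rw [fderiv_clm_apply hd (differentiableAt_const e), iteratedFDeriv_two_apply]
  simp

theorem IsLocalMax.iteratedFDeriv_two_nonpos {f : E → ℝ} (hmax : IsLocalMax f x)
    (hf : ContDiffAt ℝ 2 f x) (e : E) : iteratedFDeriv ℝ 2 f x ![e, e] ≤ 0 := by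
  have hline : ∀ t : ℝ, HasDerivAt (fun s : ℝ => x + s • e) e t := fun t => by
    simpa using ((hasDerivAt_id t).smul_const e).const_add x
  have hcont : Tendsto (fun s : ℝ => x + s • e) (𝓝 0) (𝓝 x) := by
    simpa using (hline 0).continuousAt.tendsto
  have hderiv : deriv (fun s : ℝ => f (x + s • e)) =ᶠ[𝓝 0]
      fun s : ℝ => fderiv ℝ f (x + s • e) e := by
    filter_upwards [hcont.eventually (hf.eventually (by simp))] with s hs
    exact ((hs.differentiableAt two_ne_zero).hasFDerivAt.comp_hasDerivAt s (hline s)).deriv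
  have hG : DifferentiableAt ℝ (fun y => fderiv ℝ f y e) x :=
    ((hf.fderiv_right (m := 1) (by norm_num)).differentiableAt one_ne_zero).clm_apply
      (differentiableAt_const e)
  have key : deriv (deriv fun s : ℝ => f (x + s • e)) 0 = iteratedFDeriv ℝ 2 f x ![e, e] := by
    rw [hderiv.deriv_eq, ← hf.fderiv_fderiv_apply_eq_iteratedFDeriv, ← hG.lineDeriv_eq_fderiv,
      lineDeriv]
  rw [← key]
  refine IsLocalMax.deriv_deriv_nonpos ?_ ?_
  · simpa [IsLocalMax, IsMaxFilter] using hcont.eventually hmax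
  · exact hf.continuousAt.comp_of_eq (hline 0).continuousAt (by simp)

end SecondDerivative

section MaximumPrinciple

variable {E : Type*} [NormedAddCommGroup E] [InnerProductSpace ℝ E] [FiniteDimensional ℝ E]

theorem laplacian_norm_sq (x : E) :
    Δ (fun y : E => ‖y‖ ^ 2) x = 2 * Module.finrank ℝ E := by
  have hfd : fderiv ℝ (fun y : E => ‖y‖ ^ 2) = fun y => 2 • innerSL ℝ y := by
    funext y; simp
  have hfd2 : fderiv ℝ (fun y : E => 2 • innerSL ℝ y) x = 2 • innerSL ℝ :=
    (2 • innerSL ℝ (E := E)).hasFDerivAt.fderiv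
  have hb : ∀ i, innerSL ℝ (stdOrthonormalBasis ℝ E i) (stdOrthonormalBasis ℝ E i) = 1 :=
    fun i => by
      rw [innerSL_apply_apply, real_inner_self_eq_norm_sq, (stdOrthonormalBasis ℝ E).norm_eq_one]
      norm_num
  simp [laplacian_eq_iteratedFDeriv_stdOrthonormalBasis, iteratedFDeriv_two_apply, hfd, hfd2, hb,
    mul_comm]

theorem IsLocalMax.laplacian_nonpos {f : E → ℝ} {x : E} (hmax : IsLocalMax f x)
    (hf : ContDiffAt ℝ 2 f x) : Δ f x ≤ 0 := by
  rw [laplacian_eq_iteratedFDeriv_stdOrthonormalBasis]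
  exact Finset.sum_nonpos fun i _ => hmax.iteratedFDeriv_two_nonpos hf _

variable [Nontrivial E] {K : Set E} {u : E → ℝ}

theorem InnerProductSpace.HarmonicOnNhd.le_of_forall_mem_frontier_le
    (hu : HarmonicOnNhd u (interior K)) (hK : IsCompact K) (hc : ContinuousOn u K)
    {C : ℝ} (hC : ∀ z ∈ frontier K, u z ≤ C) : ∀ z ∈ K, u z ≤ C := by
  obtain ⟨R, hR⟩ := hK.isBounded.subset_closedBall 0
  have hperturbed : ∀ ε > 0, ∀ z ∈ K, u z ≤ C + ε * R ^ 2 := by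
    intro ε hε z hz
    set F : E → ℝ := u + ε • fun y => ‖y‖ ^ 2
    obtain ⟨z₀, hz₀K, hz₀max⟩ := hK.exists_isMaxOn ⟨z, hz⟩
      (hc.add ((continuous_norm.pow 2).const_smul ε).continuousOn)
    -- `Δ F = 2 ε dim E > 0`, which rules out an interior maximum of `F`
    have hz₀ : z₀ ∈ frontier K := by
      refine ⟨subset_closure hz₀K, fun hint => ?_⟩
      have hq : ContDiffAt ℝ 2 (ε • fun y : E => ‖y‖ ^ 2) z₀ :=
        (contDiff_norm_sq ℝ).contDiffAt.const_smul ε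
      have hΔ : Δ F z₀ = ε * (2 * Module.finrank ℝ E) := by
        rw [(hu z₀ hint).1.laplacian_add hq, (hu z₀ hint).2.self_of_nhds,
          laplacian_smul ε (contDiff_norm_sq ℝ).contDiffAt, laplacian_norm_sq]
        simp
      have hmax : Δ F z₀ ≤ 0 :=
        (hz₀max.isLocalMax (mem_interior_iff_mem_nhds.mp hint)).laplacian_nonpos
          ((hu z₀ hint).1.add hq)
      have hdim : (0 : ℝ) < Module.finrank ℝ E := by exact_mod_cast Module.finrank_pos
      rw [hΔ] at hmax
      nlinarith
    have hnorm : ‖z₀‖ ≤ R := by simpa using hR hz₀K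
    calc u z ≤ u z + ε * ‖z‖ ^ 2 := le_add_of_nonneg_right (by positivity)
      _ ≤ u z₀ + ε * ‖z₀‖ ^ 2 := hz₀max hz
      _ ≤ C + ε * R ^ 2 := by gcongr; exact hC z₀ hz₀
  intro z hz
  have hlim : Tendsto (fun ε => C + ε * R ^ 2) (𝓝[>] 0) (𝓝 C) := by
    have : Continuous (fun ε : ℝ => C + ε * R ^ 2) := by fun_prop
    simpa using (this.tendsto 0).mono_left nhdsWithin_le_nhds
  exact ge_of_tendsto hlim (eventually_nhdsWithin_of_forall fun ε hε => hperturbed ε hε z hz)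

theorem InnerProductSpace.HarmonicOnNhd.abs_le_of_forall_mem_frontier_abs_le {w : E → ℝ}
    (hu : HarmonicOnNhd u (interior K)) (hw : HarmonicOnNhd w (interior K)) (hK : IsCompact K)
    (huc : ContinuousOn u K) (hwc : ContinuousOn w K) (h : ∀ z ∈ frontier K, |u z| ≤ w z) :
    ∀ z ∈ K, |u z| ≤ w z := by
  intro z hz
  have hle := (hu.sub hw).le_of_forall_mem_frontier_le hK (huc.sub hwc) (C := 0)
    (fun y hy => by simpa using (abs_le.mp (h y hy)).2) z hz
  have hge := (hu.neg.sub hw).le_of_forall_mem_frontier_le hK (huc.neg.sub hwc) (C := 0)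
    (fun y hy => by simp only [Pi.sub_apply, Pi.neg_apply]; linarith [(abs_le.mp (h y hy)).1])
    z hz
  simp only [Pi.sub_apply, Pi.neg_apply] at hle hge
  exact abs_le.mpr ⟨by linarith, by linarith⟩

end MaximumPrinciple

theorem lap_eq_laplacian {f : ℂ → ℝ} {x : ℂ} (hf : ContDiffAt ℝ 2 f x) : lap f x = Δ f x := by
  rw [lap, hf.fderiv_fderiv_apply_eq_iteratedFDeriv, hf.fderiv_fderiv_apply_eq_iteratedFDeriv,
    laplacian_eq_iteratedFDeriv_complexPlane]

theorem harmonicOnNhd_of_lap_eq_zero {f : ℂ → ℝ} {s : Set ℂ} (hs : IsOpen s)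
    (hf : ContDiffOn ℝ 2 f s) (h : ∀ x ∈ s, lap f x = 0) : HarmonicOnNhd f s := fun x hx =>
  ⟨hf.contDiffAt (hs.mem_nhds hx), by
    filter_upwards [hs.mem_nhds hx] with y hy
    rw [← lap_eq_laplacian (hf.contDiffAt (hs.mem_nhds hy))]
    exact h y hy⟩

theorem sector_eq_setOf_re {δ : ℝ} (h0 : -(π / 2) ≤ δ) (h1 : δ ≤ π / 2) :
    sector δ = {z : ℂ | ‖z‖ ≤ 1 ∧ ‖z‖ * cos (π / 2 + δ) ≤ z.re} := by
  ext z
  simp only [sector, mem_ofPred_eq, and_congr_right_iff]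
  intro _
  rw [← Complex.norm_mul_cos_arg, ← cos_abs (Complex.arg z)]
  rcases eq_or_ne z 0 with rfl | hz
  · simp; linarith
  rw [mul_le_mul_iff_right₀ (norm_pos_iff.mpr hz)]
  exact (strictAntiOn_cos.le_iff_ge ⟨by linarith, by linarith⟩
    ⟨abs_nonneg _, Complex.abs_arg_le_pi z⟩).symm

theorem isCompact_sector {δ : ℝ} (h0 : -(π / 2) ≤ δ) (h1 : δ ≤ π / 2) :
    IsCompact (sector δ) := by
  refine (isCompact_closedBall (0 : ℂ) 1).of_isClosed_subset ?_ fun z hz => by simpa using hz.1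
  rw [sector_eq_setOf_re h0 h1]
  exact (isClosed_le continuous_norm continuous_const).inter
    (isClosed_le (continuous_norm.mul continuous_const) Complex.continuous_re)

theorem mem_slitPlane_of_mem_sector {δ : ℝ} (hδ : δ < π / 2) {z : ℂ} (hz : z ∈ sector δ)
    (hz0 : z ≠ 0) : z ∈ Complex.slitPlane := by
  refine Complex.mem_slitPlane_iff_arg.mpr ⟨fun harg => ?_, hz0⟩
  have := hz.2
  rw [harg, abs_of_pos pi_pos] at this
  linarith

theorem zero_notMem_interior_sector {δ : ℝ} (hδ : δ < π / 2) :
    (0 : ℂ) ∉ interior (sector δ) := by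
  intro h
  have hneg : Tendsto (fun t : ℝ => ((-t : ℝ) : ℂ)) (𝓝[>] 0) (𝓝 0) := by
    have : Continuous (fun t : ℝ => ((-t : ℝ) : ℂ)) := by fun_prop
    simpa using (this.tendsto 0).mono_left nhdsWithin_le_nhds
  obtain ⟨t, ht, hpos⟩ := ((hneg.eventually (mem_interior_iff_mem_nhds.mp h)).and
    self_mem_nhdsWithin).exists
  have := ht.2
  rw [Complex.arg_ofReal_of_neg (neg_neg_of_pos hpos), abs_of_pos pi_pos] at this
  linarith

theorem interior_sector_subset_slitPlane {δ : ℝ} (hδ : δ < π / 2) :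
    interior (sector δ) ⊆ Complex.slitPlane := fun z hz =>
  mem_slitPlane_of_mem_sector hδ (interior_subset hz) (by
    rintro rfl; exact zero_notMem_interior_sector hδ hz)

theorem cos_mul_sub_cos_mul_pi_div_two_le {p ψ : ℝ} (hp : 0 ≤ p) (hψ0 : 0 ≤ ψ)
    (hψ : ψ ≤ π / 2) : cos (p * ψ) - cos (p * (π / 2)) ≤ π * p / 2 * cos ψ := by
  have hlip : cos (p * ψ) - cos (p * (π / 2)) ≤ p * (π / 2 - ψ) := by
    have := (le_abs_self _).trans (abs_cos_sub_cos_le (p * ψ) (p * (π / 2)))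
    rwa [← mul_sub, abs_mul, abs_of_nonneg hp, abs_of_nonpos (by linarith), neg_sub] at this
  have hjordan : 2 / π * (π / 2 - ψ) ≤ cos ψ := by
    simpa [sin_pi_div_two_sub] using mul_le_sin (x := π / 2 - ψ) (by linarith) (by linarith)
  calc cos (p * ψ) - cos (p * (π / 2)) ≤ p * (π / 2 - ψ) := hlip
    _ = π * p / 2 * (2 / π * (π / 2 - ψ)) := by field_simp
    _ ≤ π * p / 2 * cos ψ := by gcongr

def sectorBarrier (p γ : ℝ) (z : ℂ) : ℝ :=
  ((π * p / 2 : ℝ) * z ^ (γ : ℂ) - z ^ ((p * γ : ℝ) : ℂ)).re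

theorem sectorBarrier_apply (p γ : ℝ) (z : ℂ) :
    sectorBarrier p γ z = π * p / 2 * ‖z‖ ^ γ * cos (Complex.arg z * γ)
      - ‖z‖ ^ (p * γ) * cos (Complex.arg z * (p * γ)) := by
  simp only [sectorBarrier, Complex.sub_re, Complex.re_ofReal_mul, Complex.cpow_ofReal_re]
  ring

theorem harmonicOnNhd_sectorBarrier (p γ : ℝ) :
    HarmonicOnNhd (sectorBarrier p γ) Complex.slitPlane := fun _ hz =>
  ((analyticAt_const.mul (analyticAt_id.cpow analyticAt_const hz)).sub
    (analyticAt_id.cpow analyticAt_const hz)).harmonicAt_re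

theorem continuousOn_sectorBarrier {p γ : ℝ} (hp : 0 < p) (hγ : 0 < γ) :
    ContinuousOn (sectorBarrier p γ) (insert 0 Complex.slitPlane) := by
  intro z hz
  have hz' : 0 ≤ z.re ∨ z.im ≠ 0 := by
    rcases hz with rfl | hz
    · simp
    · exact (Complex.mem_slitPlane_iff.mp hz).imp le_of_lt id
  have hcpow : ∀ {σ : ℝ}, 0 < σ → ContinuousAt (fun z : ℂ => z ^ (σ : ℂ)) z := fun hσ =>
    Complex.continuousAt_cpow_const_of_re_pos hz' (by simpa using hσ)
  exact (Complex.continuous_re.continuousAt.comp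
    (((hcpow hγ).const_mul _).sub (hcpow (mul_pos hp hγ)))).continuousWithinAt

theorem sectorBarrier_le {p γ : ℝ} (hp : 1 ≤ p) (hγ : 0 < γ) {z : ℂ} (hz : ‖z‖ ≤ 1) :
    sectorBarrier p γ z ≤ (π * p / 2 + 1) * ‖z‖ ^ γ := by
  have hpow : ‖z‖ ^ (p * γ) ≤ ‖z‖ ^ γ :=
    rpow_le_rpow_of_exponent_ge' (norm_nonneg z) hz hγ.le (le_mul_of_one_le_left hγ.le hp)
  rw [sectorBarrier_apply]
  have h1 := neg_one_le_cos (Complex.arg z * (p * γ))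
  have h2 := cos_le_one (Complex.arg z * γ)
  have h3 : 0 ≤ ‖z‖ ^ (p * γ) := by positivity
  have h4 : 0 ≤ π * p / 2 * ‖z‖ ^ γ := by positivity
  nlinarith

theorem le_sectorBarrier {δ p γ : ℝ} (hγ : γ * (π / 2 + δ) = π / 2) (hγ0 : 0 < γ) (hp : 1 ≤ p)
    {z : ℂ} (hz : z ∈ sector δ) :
    -cos (p * (π / 2)) * ‖z‖ ^ (p * γ) ≤ sectorBarrier p γ z := by
  set ψ := γ * |Complex.arg z| with hψdef
  have hψ0 : 0 ≤ ψ := by positivity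
  have hψ : ψ ≤ π / 2 := hγ ▸ mul_le_mul_of_nonneg_left hz.2 hγ0.le
  have hcos : ∀ c : ℝ, cos (Complex.arg z * (c * γ)) = cos (c * ψ) := fun c => by
    rcases abs_cases (Complex.arg z) with ⟨h, _⟩ | ⟨h, _⟩
    · rw [hψdef, h]; ring_nf
    · rw [hψdef, h, ← cos_neg]; ring_nf
  have htrig := cos_mul_sub_cos_mul_pi_div_two_le (p := p) (by linarith) hψ0 hψ
  have hpow : ‖z‖ ^ (p * γ) ≤ ‖z‖ ^ γ :=
    rpow_le_rpow_of_exponent_ge' (norm_nonneg z) hz.1 hγ0.le (le_mul_of_one_le_left hγ0.le hp)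
  have hcosψ : 0 ≤ cos ψ := cos_nonneg_of_mem_Icc ⟨by linarith [pi_pos], hψ⟩
  have h1 := mul_le_mul_of_nonneg_left htrig (by positivity : 0 ≤ ‖z‖ ^ (p * γ))
  have h2 := mul_le_mul_of_nonneg_right hpow (by positivity : 0 ≤ π * p / 2 * cos ψ)
  rw [sectorBarrier_apply, hcos p, ← one_mul γ, hcos 1, one_mul, one_mul]
  linarith

theorem abs_le_mul_rpow_of_harmonicOnNhd_sector {δ p γ : ℝ} (hδ : δ ∈ Ioo (-(π / 2)) (π / 2))
    (hγ : γ * (π / 2 + δ) = π / 2) (hp : 1 ≤ p) (hcos : cos (p * (π / 2)) < 0) {u : ℂ → ℝ}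
    (hc : ContinuousOn u (sector δ)) (hu : HarmonicOnNhd u (interior (sector δ)))
    (hb : ∀ z ∈ frontier (sector δ), u z = ‖z‖ ^ (p * γ)) :
    ∀ z ∈ sector δ, |u z| ≤ (π * p / 2 + 1) / -cos (p * (π / 2)) * ‖z‖ ^ γ := by
  have hγ0 : 0 < γ := by nlinarith [hδ.1, pi_pos]
  have hs : 0 < -cos (p * (π / 2)) := neg_pos.mpr hcos
  have hK := isCompact_sector hδ.1.le hδ.2.le
  set w : ℂ → ℝ := (-cos (p * (π / 2)))⁻¹ • sectorBarrier p γ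
  have hwc : ContinuousOn w (sector δ) :=
    ((continuousOn_sectorBarrier (by linarith) hγ0).mono fun z hz =>
      (eq_or_ne z 0).imp id (mem_slitPlane_of_mem_sector hδ.2 hz)).const_smul _
  have hw : HarmonicOnNhd w (interior (sector δ)) :=
    ((harmonicOnNhd_sectorBarrier p γ).mono (interior_sector_subset_slitPlane hδ.2)).const_smul
  have hbound := hu.abs_le_of_forall_mem_frontier_abs_le hw hK hc hwc fun z hz => by
    have hzK := hK.isClosed.frontier_subset hz
    show |u z| ≤ (-cos (p * (π / 2)))⁻¹ * sectorBarrier p γ z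
    rw [hb z hz, abs_of_nonneg (by positivity), le_inv_mul_iff₀ hs]
    exact le_sectorBarrier hγ hγ0 hp hzK
  intro z hz
  calc |u z| ≤ w z := hbound z hz
    _ ≤ (-cos (p * (π / 2)))⁻¹ * ((π * p / 2 + 1) * ‖z‖ ^ γ) :=
      mul_le_mul_of_nonneg_left (sectorBarrier_le hp hγ0 hz.1) (inv_nonneg.mpr hs.le)
    _ = (π * p / 2 + 1) / -cos (p * (π / 2)) * ‖z‖ ^ γ := by ring

/-- Let `δ ∈ (0, π/2)` and `p = 1 + 2δ/π`.  There is a constant `C > 0` such that: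
(i) every function `Φ₁` continuous on the sector `D_δ`, harmonic in its interior and equal
to `|x|` on `∂D_δ` satisfies `|Φ₁(x)| ≤ C·|x|^{1/p}` on `D_δ`; equivalently (via the
conformal map `z ↦ z^p` taking the half disc `D′ = sector 0` onto `D_δ`),
(ii) every function `v` continuous on the half disc `D′`, harmonic in its interior and with
boundary values `|x|^p` on `∂D′` satisfies `|v(x)| ≤ C·|x|` on `D′`. -/
theorem harmonic_sector_upper_bound (δ : ℝ) (hδ : δ ∈ Ioo (0 : ℝ) (Real.pi / 2)) :
    ∃ C > (0 : ℝ),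
      (∀ Φ : ℂ → ℝ, ContinuousOn Φ (sector δ) →
        ContDiffOn ℝ 2 Φ (interior (sector δ)) →
        (∀ x ∈ interior (sector δ), lap Φ x = 0) →
        (∀ x ∈ frontier (sector δ), Φ x = ‖x‖) →
        ∀ x ∈ sector δ,
          |Φ x| ≤ C * ‖x‖ ^ (1 / (1 + 2 * δ / Real.pi))) ∧
      (∀ v : ℂ → ℝ, ContinuousOn v (sector 0) →
        ContDiffOn ℝ 2 v (interior (sector 0)) →
        (∀ x ∈ interior (sector 0), lap v x = 0) →
        (∀ x ∈ frontier (sector 0), v x = ‖x‖ ^ (1 + 2 * δ / Real.pi)) →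
        ∀ x ∈ sector 0, |v x| ≤ C * ‖x‖) := by
  obtain ⟨hδ0, hδπ⟩ := hδ
  set p := 1 + 2 * δ / π
  have hp : 1 ≤ p := le_add_of_nonneg_right (by positivity)
  have hsin : 0 < sin δ := sin_pos_of_pos_of_lt_pi hδ0 (by linarith [pi_pos])
  have hpπ : p * π = π + 2 * δ := by simp only [p]; field_simp
  have hcos : cos (p * (π / 2)) = -sin δ := by
    rw [← cos_add_pi_div_two]; congr 1; linarith
  have hcos_neg : cos (p * (π / 2)) < 0 := by linarith
  have hγ : 1 / p * (π / 2 + δ) = π / 2 := by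
    rw [div_mul_eq_mul_div, one_mul, div_eq_iff (by positivity)]; linarith
  refine ⟨(π * p / 2 + 1) / sin δ, by positivity, fun Φ hc hd hlap hb => ?_,
    fun v hc hd hlap hb => ?_⟩
  · have h := abs_le_mul_rpow_of_harmonicOnNhd_sector ⟨by linarith, hδπ⟩ hγ hp hcos_neg hc
      (harmonicOnNhd_of_lap_eq_zero isOpen_interior hd hlap)
      fun z hz => by rw [hb z hz, mul_one_div_cancel (by positivity), rpow_one]
    rwa [hcos, neg_neg] at h
  · have h := abs_le_mul_rpow_of_harmonicOnNhd_sector (γ := 1)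
      ⟨by linarith [pi_pos], by linarith [pi_pos]⟩ (by ring) hp hcos_neg hc
      (harmonicOnNhd_of_lap_eq_zero isOpen_interior hd hlap) fun z hz => by rw [hb z hz, mul_one]
    simpa only [hcos, neg_neg, rpow_one] using h
end
end
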